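/- Let A be a clone over ℕ and n ≥ 1. Define the n-th matrix power A^[n] as follows: its underlying set is A^n (functions {1,…,n} → A); for v : ℕ → A^n let ⟨v⟩ : ℕ → A be the concatenation ⟨v⟩((k−1)·n + r) = v(k)(r) for k ≥ 1 and 1 ≤ r ≤ n; the substitution is u⟦v⟧(i) := u(i)[⟨v⟩] for u ∈ A^n, v : ℕ → A^n, 1 ≤ i ≤ n; the k-th distinguished element is X_k ∈ A^n with X_k(i) = x_{(k−1)·n + i}. Then A^[n] is a clone over ℕ: (u⟦v⟧)⟦w⟧ = u⟦fun k => (v k)⟦w⟧⟧, u⟦X⟧ = u where X(k) = X_k, and X_k⟦v⟧ = v k. -/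

import Mathlib

/-- A clone over the positive integers ℕ = {1,2,3,…}. -/
structure CloneN (A : Type*) where
  sub : A → (ℕ+ → A) → A
  x : ℕ+ → A
  sub_assoc : ∀ (a : A) (f g : ℕ+ → A), sub (sub a f) g = sub a (fun i => sub (f i) g)
  sub_x : ∀ a : A, sub a x = a
  x_sub : ∀ (i : ℕ+) (f : ℕ+ → A), sub (x i) f = f i

/-- The concatenation `⟨v⟩ : ℕ → A` of a sequence `v : ℕ → A^n`:
`⟨v⟩((k−1)·n + r) = v(k)(r)` for `k ≥ 1`, `1 ≤ r ≤ n`. Here `A^n` is modelled as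
`Fin n → A`, with `Fin`-index `r` representing position `r+1`. -/
def matConc {A : Type*} (n : ℕ) (hn : 0 < n) (v : ℕ+ → (Fin n → A)) : ℕ+ → A :=
  fun m =>
    v ⟨((m : ℕ) - 1) / n + 1, Nat.succ_pos _⟩
      ⟨((m : ℕ) - 1) % n, Nat.mod_lt _ hn⟩

/-- Substitution in the `n`-th matrix power: `u⟦v⟧(i) = u(i)[⟨v⟩]`. -/
def matSub {A : Type*} (C : CloneN A) (n : ℕ) (hn : 0 < n)
    (u : Fin n → A) (v : ℕ+ → (Fin n → A)) : Fin n → A :=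
  fun i => C.sub (u i) (matConc n hn v)

/-- The `k`-th distinguished element of the matrix power: `X_k(i) = x_{(k−1)·n + i}`
for `1 ≤ i ≤ n`. -/
def matX {A : Type*} (C : CloneN A) (n : ℕ) (k : ℕ+) : Fin n → A :=
  fun i => C.x ⟨((k : ℕ) - 1) * n + (i : ℕ) + 1, Nat.succ_pos _⟩

/-- The `n`-th matrix power `A^[n]` of a clone `A` over ℕ (for `n ≥ 1`) is again a
clone over ℕ: substitution is associative, the sequence of distinguished elements is
a right unit, and the distinguished elements are projections. -/
theorem matrix_power_is_clone {A : Type*} (C : CloneN A) (n : ℕ) (hn : 1 ≤ n) :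
    (∀ (u : Fin n → A) (v w : ℕ+ → (Fin n → A)),
      matSub C n hn (matSub C n hn u v) w =
        matSub C n hn u (fun k => matSub C n hn (v k) w)) ∧
    (∀ u : Fin n → A, matSub C n hn u (fun k => matX C n k) = u) ∧
    (∀ (k : ℕ+) (v : ℕ+ → (Fin n → A)), matSub C n hn (matX C n k) v = v k) := by
  have hconc : ∀ (v : ℕ+ → (Fin n → A)) (k : ℕ+) (i : Fin n),
      matConc n hn v ⟨((k : ℕ) - 1) * n + (i : ℕ) + 1, Nat.succ_pos _⟩ = v k i := by
    intro v k i
    have hi : (i : ℕ) < n := i.isLt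
    have hdiv : (((k : ℕ) - 1) * n + (i : ℕ) + 1 - 1) / n = (k : ℕ) - 1 := by
      simp [Nat.mul_div_cancel, Nat.add_mul_div_left, Nat.mul_comm,
        Nat.mul_add_div (show 0 < n by omega), Nat.div_eq_of_lt hi]
    have hmod : (((k : ℕ) - 1) * n + (i : ℕ) + 1 - 1) % n = (i : ℕ) := by
      simp [Nat.mul_add_mod, Nat.mod_eq_of_lt hi, Nat.add_mul_mod_self_left,
        Nat.mul_comm]
    unfold matConc
    congr 1
    · apply Subtype.ext
      show (((k : ℕ) - 1) * n + (i : ℕ) + 1 - 1) / n + 1 = (k : ℕ)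
      rw [hdiv]
      have : 1 ≤ (k : ℕ) := k.property
      omega
    · apply Fin.ext
      show (((k : ℕ) - 1) * n + (i : ℕ) + 1 - 1) % n = (i : ℕ)
      exact hmod
  refine ⟨?_, ?_, ?_⟩
  · intro u v w
    funext i
    unfold matSub
    rw [C.sub_assoc]
    congr 1
  · intro u
    funext i
    unfold matSub
    have : matConc n hn (fun k => matX C n k) = C.x := by
      funext m
      unfold matConc matX
      show C.x _ = C.x m
      congr 1
      apply Subtype.ext
      show ((⟨((m : ℕ) - 1) / n + 1, Nat.succ_pos _⟩ : ℕ+) - 1) * n + (((m : ℕ) - 1) % n) + 1 = (m : ℕ)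
      simp only [PNat.mk_ofNat]
      show (((m : ℕ) - 1) / n + 1 - 1) * n + (((m : ℕ) - 1) % n) + 1 = (m : ℕ)
      rw [Nat.add_sub_cancel]
      have h1 : ((m : ℕ) - 1) / n * n + ((m : ℕ) - 1) % n = (m : ℕ) - 1 :=
        by rw [Nat.mul_comm]; exact Nat.div_add_mod _ _
      have hm : 1 ≤ (m : ℕ) := m.property
      omega
    rw [this, C.sub_x]
  · intro k v
    funext i
    unfold matSub matX
    exact (C.x_sub _ _).trans (hconc v k i)
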